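/- If ℓ is a prime with ℓ > C(2n−1, n) (the binomial coefficient), then there exists an ℓ-Pirutka n×n integer matrix. -/

import Mathlib

open Matrix MvPolynomial Finset

variable {n : ℕ}

/-- An equiv between two finsets of equal card. -/
noncomputable def peq {I J : Finset (Fin n)} (h : I.card = J.card) :
    {x // x ∈ J} ≃ {x // x ∈ I} :=
  Fintype.equivOfCardEq (by simpa [Fintype.card_coe] using h.symm)

/-- The generic determinant polynomial of the `(I, J)` submatrix. -/
noncomputable def dtP (K : Type*) [CommRing K] (p : Finset (Fin n) × Finset (Fin n)) :
    MvPolynomial (Fin n × Fin n) K :=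
  if h : p.1.card = p.2.card then
    Matrix.det (Matrix.of fun a b : {x // x ∈ p.2} =>
      MvPolynomial.X (((peq h a : Fin n), (b : Fin n)) : Fin n × Fin n))
  else 1

lemma dtP_ne_zero (K : Type*) [CommRing K] [Nontrivial K]
    (p : Finset (Fin n) × Finset (Fin n)) : dtP K p ≠ 0 := by
  rcases p with ⟨I, J⟩
  by_cases h : I.card = J.card
  · rw [dtP, dif_pos h]
    intro h0
    classical
    set v₀ : Fin n × Fin n → K := fun q =>
      if hq : q.1 ∈ I ∧ q.2 ∈ J then
        (if peq h ⟨q.2, hq.2⟩ = ⟨q.1, hq.1⟩ then 1 else 0) else 0 with hv₀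
    have := congrArg (MvPolynomial.eval v₀) h0
    rw [map_zero, RingHom.map_det, RingHom.mapMatrix_apply] at this
    have hm : (Matrix.of fun a b : {x // x ∈ J} =>
        MvPolynomial.X (((peq h a : Fin n), (b : Fin n)) : Fin n × Fin n)).map
          (MvPolynomial.eval v₀) = 1 := by
      ext a b
      simp only [Matrix.map_apply, Matrix.of_apply, MvPolynomial.eval_X]
      rw [hv₀]
      beta_reduce
      have hmem : ((peq h a : Fin n), (b : Fin n)).1 ∈ I ∧
          ((peq h a : Fin n), (b : Fin n)).2 ∈ J := ⟨(peq h a).2, b.2⟩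
      rw [dif_pos hmem]
      have h1 : (⟨((peq h a : Fin n), (b : Fin n)).2, hmem.2⟩ : {x // x ∈ J}) = b := rfl
      have h2 : (⟨((peq h a : Fin n), (b : Fin n)).1, hmem.1⟩ : {x // x ∈ I}) = peq h a := rfl
      rw [h1, h2, Matrix.one_apply]
      by_cases hab : a = b
      · simp [hab]
      · rw [if_neg (fun hc => hab ((peq h).injective hc).symm), if_neg hab]
    rw [hm, Matrix.det_one] at this
    exact one_ne_zero this
  · rw [dtP, dif_neg h]; exact one_ne_zero

lemma dtP_degreeOf_le (K : Type*) [CommRing K] [Nontrivial K]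
    (p : Finset (Fin n) × Finset (Fin n)) (v : Fin n × Fin n) :
    MvPolynomial.degreeOf v (dtP K p) ≤ if v.1 ∈ p.1 ∧ v.2 ∈ p.2 then 1 else 0 := by
  classical
  rcases p with ⟨I, J⟩
  by_cases h : I.card = J.card
  · rw [dtP, dif_pos h, Matrix.det_apply']
    refine le_trans (MvPolynomial.degreeOf_sum_le _ _ _) ?_
    refine Finset.sup_le fun σ _ => ?_
    refine le_trans (MvPolynomial.degreeOf_mul_le _ _ _) ?_
    have hC : MvPolynomial.degreeOf v
        (((Equiv.Perm.sign σ : ℤ) : MvPolynomial (Fin n × Fin n) K)) = 0 := by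
      rw [← map_intCast (MvPolynomial.C : K →+* MvPolynomial (Fin n × Fin n) K)]
      exact MvPolynomial.degreeOf_C _ _
    rw [hC, zero_add]
    refine le_trans (MvPolynomial.degreeOf_prod_le _ _ _) ?_
    by_cases hv : v.1 ∈ I ∧ v.2 ∈ J
    · rw [if_pos hv]
      set i₀ : {x // x ∈ J} := ⟨v.2, hv.2⟩ with hi₀
      calc ∑ i : {x // x ∈ J}, (MvPolynomial.X (R := K)
              (((peq h (σ i) : Fin n), (i : Fin n)) : Fin n × Fin n)).degreeOf v
          ≤ ∑ i : {x // x ∈ J}, if i = i₀ then 1 else 0 := by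
            refine Finset.sum_le_sum fun i _ => ?_
            rw [MvPolynomial.degreeOf_X]
            by_cases he : v = ((peq h (σ i) : Fin n), (i : Fin n))
            · rw [if_pos he, if_pos]
              exact Subtype.ext (congrArg Prod.snd he).symm
            · rw [if_neg he]
              exact Nat.zero_le _
        _ = 1 := by rw [Finset.sum_ite_eq' Finset.univ i₀ (fun _ => 1), if_pos (Finset.mem_univ _)]
    · rw [if_neg hv]
      rw [Finset.sum_eq_zero]
      intro i _
      simp only [Matrix.of_apply]
      rw [MvPolynomial.degreeOf_X, if_neg]
      intro he
      exact hv ⟨(congrArg Prod.fst he) ▸ (peq h (σ i)).2, (congrArg Prod.snd he) ▸ i.2⟩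
  · rw [dtP, dif_neg h, ← MvPolynomial.C_1]
    rw [MvPolynomial.degreeOf_C]
    exact Nat.zero_le _

lemma pirutka_count_le (hn : 1 ≤ n) (v : Fin n × Fin n) :
    ((Finset.univ : Finset (Finset (Fin n) × Finset (Fin n))).filter
      (fun p => p.1.card = p.2.card ∧ v.1 ∈ p.1 ∧ v.2 ∈ p.2)).card
      ≤ Nat.choose (2 * n - 1) n := by
  classical
  set g : Fin n → ℕ := fun x => if (x : ℕ) < (v.2 : ℕ) then n + x else n + x - 1 with hg
  have hg_ge : ∀ x : Fin n, x ≠ v.2 → n ≤ g x := by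
    intro x hx
    have hxv : (x : ℕ) ≠ (v.2 : ℕ) := fun hc => hx (Fin.ext hc)
    rw [hg]
    dsimp only
    split <;> omega
  have hg_lt : ∀ x : Fin n, x ≠ v.2 → g x < 2 * n - 1 := by
    intro x hx
    have hxv : (x : ℕ) ≠ (v.2 : ℕ) := fun hc => hx (Fin.ext hc)
    have h1 : (x : ℕ) < n := x.2
    have h2 : (v.2 : ℕ) < n := (v.2).2
    rw [hg]
    dsimp only
    split <;> omega
  have hg_inj : ∀ x y : Fin n, x ≠ v.2 → y ≠ v.2 → g x = g y → x = y := by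
    intro x y hx hy hxy
    have hxv : (x : ℕ) ≠ (v.2 : ℕ) := fun hc => hx (Fin.ext hc)
    have hyv : (y : ℕ) ≠ (v.2 : ℕ) := fun hc => hy (Fin.ext hc)
    rw [hg] at hxy
    dsimp only at hxy
    refine Fin.ext ?_
    split at hxy <;> split at hxy <;> omega
  set φ : Finset (Fin n) × Finset (Fin n) → Finset ℕ := fun p =>
    p.1.image (fun x : Fin n => (x : ℕ)) ∪ (Finset.univ \ p.2).image g with hφ
  -- the two parts of φ p can be recovered
  have hpart1 : ∀ p : Finset (Fin n) × Finset (Fin n), v.2 ∈ p.2 →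
      (φ p).filter (fun m => m < n) = p.1.image (fun x : Fin n => (x : ℕ)) := by
    intro p hp2
    rw [hφ]
    dsimp only
    rw [Finset.filter_union]
    have h1 : (p.1.image (fun x : Fin n => (x : ℕ))).filter (fun m => m < n)
        = p.1.image (fun x : Fin n => (x : ℕ)) := by
      refine Finset.filter_true_of_mem ?_
      intro m hm
      rcases Finset.mem_image.1 hm with ⟨x, _, rfl⟩
      exact x.2
    have h2 : ((Finset.univ \ p.2).image g).filter (fun m => m < n) = ∅ := by
      refine Finset.filter_false_of_mem ?_
      intro m hm
      rcases Finset.mem_image.1 hm with ⟨x, hx, rfl⟩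
      have hxne : x ≠ v.2 := by
        intro hc; subst hc
        exact (Finset.mem_sdiff.1 hx).2 hp2
      exact not_lt.2 (hg_ge x hxne)
    rw [h1, h2, Finset.union_empty]
  have hpart2 : ∀ p : Finset (Fin n) × Finset (Fin n), v.2 ∈ p.2 →
      (φ p).filter (fun m => ¬ m < n) = (Finset.univ \ p.2).image g := by
    intro p hp2
    rw [hφ]
    dsimp only
    rw [Finset.filter_union]
    have h1 : (p.1.image (fun x : Fin n => (x : ℕ))).filter (fun m => ¬ m < n) = ∅ := by
      refine Finset.filter_false_of_mem ?_
      intro m hm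
      rcases Finset.mem_image.1 hm with ⟨x, _, rfl⟩
      exact not_not.2 x.2
    have h2 : ((Finset.univ \ p.2).image g).filter (fun m => ¬ m < n)
        = (Finset.univ \ p.2).image g := by
      refine Finset.filter_true_of_mem ?_
      intro m hm
      rcases Finset.mem_image.1 hm with ⟨x, hx, rfl⟩
      have hxne : x ≠ v.2 := by
        intro hc; subst hc
        exact (Finset.mem_sdiff.1 hx).2 hp2
      exact not_lt.2 (hg_ge x hxne)
    rw [h1, h2, Finset.empty_union]
  refine le_trans (Finset.card_le_card_of_injOn (t := (Finset.range (2*n-1)).powersetCard n) φ ?_ ?_) ?_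
  · -- maps to powersetCard n (range (2*n-1))
    intro p hp
    rw [Finset.mem_coe, Finset.mem_filter] at hp
    obtain ⟨-, hcard, hv1, hv2⟩ := hp
    rw [Finset.mem_coe, Finset.mem_powersetCard]
    constructor
    · intro m hm
      rw [hφ] at hm
      dsimp only at hm
      rcases Finset.mem_union.1 hm with hm | hm
      · rcases Finset.mem_image.1 hm with ⟨x, _, rfl⟩
        exact Finset.mem_range.2 (lt_of_lt_of_le x.2 (by omega))
      · rcases Finset.mem_image.1 hm with ⟨x, hx, rfl⟩
        have hxne : x ≠ v.2 := by
          intro hc; subst hc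
          exact (Finset.mem_sdiff.1 hx).2 hv2
        exact Finset.mem_range.2 (hg_lt x hxne)
    · -- card = n
      rw [hφ]
      dsimp only
      rw [Finset.card_union_of_disjoint, Finset.card_image_of_injective _ Fin.val_injective,
        Finset.card_image_of_injOn, Finset.card_sdiff_of_subset (Finset.subset_univ _)]
      · have : p.2.card ≤ n := by
          simpa using Finset.card_le_card (Finset.subset_univ p.2)
        simp only [Finset.card_univ, Fintype.card_fin]
        omega
      · intro x hx y hy hxy
        have hxne : x ≠ v.2 := fun hc => (Finset.mem_sdiff.1 (hc ▸ hx)).2 hv2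
        have hyne : y ≠ v.2 := fun hc => (Finset.mem_sdiff.1 (hc ▸ hy)).2 hv2
        exact hg_inj x y hxne hyne hxy
      · rw [Finset.disjoint_left]
        intro m hm hm'
        rcases Finset.mem_image.1 hm with ⟨x, _, rfl⟩
        rcases Finset.mem_image.1 hm' with ⟨y, hy, hyx⟩
        have hyne : y ≠ v.2 := fun hc => (Finset.mem_sdiff.1 (hc ▸ hy)).2 hv2
        exact absurd (hyx ▸ hg_ge y hyne) (not_le.2 x.2)
  · -- injective on the filter set
    intro p hp q hq hpq
    rw [Finset.coe_filter, Set.mem_setOf_eq] at hp hq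
    obtain ⟨-, hcardp, hv1p, hv2p⟩ := hp
    obtain ⟨-, hcardq, hv1q, hv2q⟩ := hq
    have h1 : p.1 = q.1 := by
      have := (hpart1 p hv2p).symm.trans ((congrArg _ hpq).trans (hpart1 q hv2q))
      exact Finset.image_injective Fin.val_injective this
    have h2 : p.2 = q.2 := by
      have himg : (Finset.univ \ p.2).image g = (Finset.univ \ q.2).image g :=
        (hpart2 p hv2p).symm.trans ((congrArg _ hpq).trans (hpart2 q hv2q))
      have hsd : Finset.univ \ p.2 = Finset.univ \ q.2 := by
        ext x
        by_cases hx : x = v.2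
        · subst hx
          simp [hv2p, hv2q]
        · constructor
          · intro hxm
            have : g x ∈ (Finset.univ \ q.2).image g := himg ▸
              Finset.mem_image_of_mem g hxm
            rcases Finset.mem_image.1 this with ⟨y, hy, hyx⟩
            have hyne : y ≠ v.2 := fun hc => (Finset.mem_sdiff.1 (hc ▸ hy)).2 hv2q
            rwa [← hg_inj y x hyne hx hyx]
          · intro hxm
            have : g x ∈ (Finset.univ \ p.2).image g := himg ▸
              Finset.mem_image_of_mem g hxm
            rcases Finset.mem_image.1 this with ⟨y, hy, hyx⟩
            have hyne : y ≠ v.2 := fun hc => (Finset.mem_sdiff.1 (hc ▸ hy)).2 hv2p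
            rwa [← hg_inj y x hyne hx hyx]
      have := congrArg (fun s => Finset.univ \ s) hsd
      simpa using this
    exact Prod.ext h1 h2
  · rw [Finset.card_powersetCard, Finset.card_range]

lemma rank_submatrix_equiv {R : Type*} [CommRing R] {m n l o : Type*}
    [Fintype n] [Fintype o] (A : Matrix m n R) (e₁ : l ≃ m) (e₂ : o ≃ n) :
    (A.submatrix e₁ e₂).rank = A.rank := by
  rw [Matrix.rank, Matrix.rank, Matrix.mulVecLin_submatrix, LinearMap.range_comp,
    LinearMap.range_comp,
    show LinearMap.funLeft R R e₂.symm = LinearEquiv.funCongrLeft R R e₂.symm from rfl,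
    LinearEquiv.range, Submodule.map_top,
    show LinearMap.funLeft R R e₁ = LinearEquiv.funCongrLeft R R e₁ from rfl]
  exact LinearEquiv.finrank_map_eq _ _

/-- An `n × d` integer matrix `T` is `ℓ`-Pirutka if for all nonempty subsets
`I ⊆ Fin n` and `J ⊆ Fin d` with `|I| - |J| = n - d`, the submatrix `T_{I,J}`
has maximal rank `|J|` modulo `ℓ`. -/
def IsPirutka (ℓ n d : ℕ) (T : Matrix (Fin n) (Fin d) ℤ) : Prop :=
  ∀ (I : Finset (Fin n)) (J : Finset (Fin d)), I.Nonempty → J.Nonempty →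
    I.card + d = J.card + n →
    ((T.map (Int.cast : ℤ → ZMod ℓ)).submatrix
        (fun i : {x // x ∈ I} => (i : Fin n))
        (fun j : {x // x ∈ J} => (j : Fin d))).rank = J.card

/-- If `ℓ > C(2n-1, n)` is prime, then there exists an ℓ-Pirutka `n × n`
integer matrix. -/
theorem exists_pirutka_of_large_prime (n ℓ : ℕ) (hℓ : ℓ.Prime)
    (h : Nat.choose (2 * n - 1) n < ℓ) :
    ∃ T : Matrix (Fin n) (Fin n) ℤ, IsPirutka ℓ n n T := by
  classical
  haveI := Fact.mk hℓ
  rcases Nat.eq_zero_or_pos n with rfl | hn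
  · exact ⟨0, fun I J hI hJ _ => (hI.choose).elim0⟩
  set K := ZMod ℓ with hK
  set S : Finset (Finset (Fin n) × Finset (Fin n)) :=
    Finset.univ.filter (fun p => p.1.card = p.2.card ∧ p.1.Nonempty) with hS
  set P : MvPolynomial (Fin n × Fin n) K := ∏ p ∈ S, dtP K p with hP
  have hP0 : P ≠ 0 := Finset.prod_ne_zero_iff.2 fun p _ => dtP_ne_zero K p
  have hmem : P ∈ MvPolynomial.restrictDegree (Fin n × Fin n) K (Fintype.card K - 1) := by
    rw [MvPolynomial.mem_restrictDegree_iff_sup]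
    intro v
    rw [← MvPolynomial.degreeOf_def]
    calc P.degreeOf v ≤ ∑ p ∈ S, (dtP K p).degreeOf v := by
          rw [hP]; exact MvPolynomial.degreeOf_prod_le v S _
      _ ≤ ∑ p ∈ S, (if v.1 ∈ p.1 ∧ v.2 ∈ p.2 then 1 else 0) :=
          Finset.sum_le_sum fun p _ => dtP_degreeOf_le K p v
      _ = (S.filter (fun p => v.1 ∈ p.1 ∧ v.2 ∈ p.2)).card := by
          rw [Finset.sum_boole]; norm_num
      _ ≤ ((Finset.univ : Finset (Finset (Fin n) × Finset (Fin n))).filter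
            (fun p => p.1.card = p.2.card ∧ v.1 ∈ p.1 ∧ v.2 ∈ p.2)).card := by
          refine Finset.card_le_card ?_
          intro p hp
          simp only [hS, Finset.mem_filter, Finset.filter_filter, Finset.mem_univ,
            true_and] at hp ⊢
          tauto
      _ ≤ Nat.choose (2 * n - 1) n := pirutka_count_le hn v
      _ ≤ Fintype.card K - 1 := by
          have : Fintype.card K = ℓ := ZMod.card ℓ
          omega
  obtain ⟨w, hw⟩ : ∃ w : Fin n × Fin n → K, MvPolynomial.eval w P ≠ 0 := by
    by_contra hc
    push_neg at hc
    exact hP0 (MvPolynomial.eq_zero_of_eval_eq_zero _ _ P hc hmem)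
  set T : Matrix (Fin n) (Fin n) ℤ := fun i j => ((w (i, j)).val : ℤ) with hT
  refine ⟨T, ?_⟩
  intro I J hI hJ hcard
  have h' : I.card = J.card := by omega
  set A : Matrix {x // x ∈ I} {x // x ∈ J} K := (T.map (Int.cast : ℤ → ZMod ℓ)).submatrix
      (fun i : {x // x ∈ I} => (i : Fin n)) (fun j : {x // x ∈ J} => (j : Fin n)) with hA
  have hTw : ∀ i j : Fin n, ((T i j : ℤ) : K) = w (i, j) := by
    intro i j
    rw [hT]
    dsimp only
    push_cast
    exact ZMod.natCast_rightInverse (w (i, j))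
  have hdet : (A.submatrix (peq h') (Equiv.refl _)).det ≠ 0 := by
    have hSmem : (I, J) ∈ S := by
      simp only [hS, Finset.mem_filter, Finset.mem_univ, true_and]
      exact ⟨h', hI⟩
    have hne : MvPolynomial.eval w (dtP K (I, J)) ≠ 0 := by
      intro h0
      apply hw
      rw [hP, map_prod]
      exact Finset.prod_eq_zero hSmem h0
    rw [dtP, dif_pos h', RingHom.map_det, RingHom.mapMatrix_apply] at hne
    convert hne using 2
    ext a b
    simp only [Matrix.submatrix_apply, Matrix.map_apply, Matrix.of_apply,
      MvPolynomial.eval_X, hA, Equiv.refl_apply]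
    exact hTw _ _
  have hrank : (A.submatrix (peq h') (Equiv.refl _)).rank = A.rank :=
    rank_submatrix_equiv A (peq h') (Equiv.refl _)
  have hunit : IsUnit (A.submatrix (peq h') (Equiv.refl _)) :=
    (Matrix.isUnit_iff_isUnit_det _).2 (isUnit_iff_ne_zero.2 hdet)
  rw [← hrank, Matrix.rank_of_isUnit _ hunit, Fintype.card_coe]
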